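/- Let H be a real inner product space, let G : H → H be a linear operator, and let φ : [0,T] → H and R : [0,T] → ℝ be differentiable, with W : [0,T] → H. Suppose the continuous SAV system holds: φ' (t) = −W(t), W(t) = G*G φ(t) + (R(t)/√(F₁(φ(t)))) N'(φ(t)), and R'(t) = ⟨N'(φ(t))/(2√(F₁(φ(t)))), φ'(t)⟩, where N'(φ(t)) ∈ H and F₁(φ(t)) > 0. Then the modified energy E(t) = ½‖Gφ(t)‖² + R(t)² − C₁ satisfies E'(t) = −‖W(t)‖² ≤ 0; in particular E is nonincreasing. -/

import Mathlib

open Filter Topology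
open scoped RealInnerProductSpace

/-- Energy dissipation law for the continuous SAV system: if `φ' = −W`,
`W = G*G φ + (R/√F₁) N'`, and `R' = ⟨N'/(2√F₁), φ'⟩`, then the modified energy
`E = ½‖Gφ‖² + R² − C₁` satisfies `E' = −‖W‖² ≤ 0`, so `E` is nonincreasing on `[0,T]`. -/
theorem sav_continuous_energy_dissipation
    {H : Type*} [NormedAddCommGroup H] [InnerProductSpace ℝ H]
    (T C₁ : ℝ) (G GG : H →L[ℝ] H)
    (hadj : ∀ a b : H, ⟪GG a, b⟫ = ⟪G a, G b⟫)
    (φ W Np : ℝ → H) (Rv F1 : ℝ → ℝ)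
    (hF1 : ∀ t ∈ Set.Icc (0:ℝ) T, 0 < F1 t)
    (hφ : ∀ t ∈ Set.Icc (0:ℝ) T, HasDerivAt φ (-(W t)) t)
    (hW : ∀ t ∈ Set.Icc (0:ℝ) T,
      W t = GG (φ t) + (Rv t / Real.sqrt (F1 t)) • Np t)
    (hR : ∀ t ∈ Set.Icc (0:ℝ) T,
      HasDerivAt Rv ⟪(1 / (2 * Real.sqrt (F1 t))) • Np t, -(W t)⟫ t) :
    (∀ t ∈ Set.Icc (0:ℝ) T,
      HasDerivAt (fun s => (1/2) * ‖G (φ s)‖^2 + (Rv s)^2 - C₁) (-‖W t‖^2) t) ∧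
    AntitoneOn (fun s => (1/2) * ‖G (φ s)‖^2 + (Rv s)^2 - C₁) (Set.Icc 0 T) := by
  have key : ∀ t ∈ Set.Icc (0:ℝ) T,
      HasDerivAt (fun s => (1/2) * ‖G (φ s)‖^2 + (Rv s)^2 - C₁) (-‖W t‖^2) t := by
    intro t ht
    have hGφ : HasDerivAt (fun s => G (φ s)) (G (-(W t))) t :=
      G.hasFDerivAt.comp_hasDerivAt t (hφ t ht)
    have hinner : HasDerivAt (fun s => ⟪G (φ s), G (φ s)⟫)
        (⟪G (φ t), G (-(W t))⟫ + ⟪G (-(W t)), G (φ t)⟫) t :=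
      hGφ.inner ℝ hGφ
    have hnorm : HasDerivAt (fun s => (1/2) * ‖G (φ s)‖^2)
        ((1/2) * (⟪G (φ t), G (-(W t))⟫ + ⟪G (-(W t)), G (φ t)⟫)) t := by
      have := hinner.const_mul (1/2 : ℝ)
      simpa [real_inner_self_eq_norm_sq] using this
    have hr2 : HasDerivAt (fun s => (Rv s)^2)
        (2 * Rv t * ⟪(1 / (2 * Real.sqrt (F1 t))) • Np t, -(W t)⟫) t := by
      simpa [mul_comm, mul_assoc, mul_left_comm] using (hR t ht).fun_pow 2
    have hterm := (hnorm.fun_add hr2).sub_const C₁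
    convert hterm using 1
    case e'_4 => rfl
    case e'_5 => rfl
    have hS : Real.sqrt (F1 t) ≠ 0 := ne_of_gt (Real.sqrt_pos.2 (hF1 t ht))
    have hWnorm : -‖W t‖^2 = ⟪W t, -(W t)⟫ := by
      simp [real_inner_self_eq_norm_sq]
    rw [hWnorm]
    nth_rewrite 1 [hW t ht]
    rw [inner_add_left, real_inner_smul_left, real_inner_comm (G (-(W t))) (G (φ t)),
      ← hadj, real_inner_smul_left]
    have e : ⟪GG (W t), φ t⟫ = ⟪GG (φ t), W t⟫ := by
      rw [hadj, hadj, real_inner_comm]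
    field_simp
    simp only [map_neg, inner_neg_left, inner_neg_right, e]
    ring
  refine ⟨key, ?_⟩
  have hcont : ContinuousOn (fun s => (1/2) * ‖G (φ s)‖^2 + (Rv s)^2 - C₁) (Set.Icc 0 T) :=
    fun t ht => ((key t ht).continuousAt).continuousWithinAt
  apply antitoneOn_of_deriv_nonpos (convex_Icc 0 T) hcont
  · intro t ht
    rw [interior_Icc] at ht
    exact (key t (Set.Ioo_subset_Icc_self ht)).differentiableAt.differentiableWithinAt
  · intro t ht
    rw [interior_Icc] at ht
    rw [(key t (Set.Ioo_subset_Icc_self ht)).deriv]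
    exact neg_nonpos.mpr (by positivity)
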